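/- Let y ≠ z be points of the polytope 𝒫 with z, y ∉ 𝒪 and βᵀy < βᵀz. Then z can reach y along the line segment l joining them: there is a (state-dependent) control under which the trajectory from z remains in l and reaches y in finite time. -/

import Mathlib

open Matrix Set

/-- A trajectory of the control system `ẋ = f(x,u)` on the time interval `[0,T]`. -/
def IsTrajOn {n m : ℕ} (f : (Fin n → ℝ) → (Fin m → ℝ) → (Fin n → ℝ))
    (u : ℝ → Fin m → ℝ) (x : ℝ → Fin n → ℝ) (T : ℝ) : Prop :=
  ∀ t ∈ Set.Icc (0:ℝ) T, HasDerivAt x (f (x t) (u t)) t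

/-- `x₀` can reach `Ωf` with constraint in `Ω`. -/
def CanReach {n m : ℕ} (f : (Fin n → ℝ) → (Fin m → ℝ) → (Fin n → ℝ))
    (Ω Ωf : Set (Fin n → ℝ)) (x₀ : Fin n → ℝ) : Prop :=
  ∃ (u : ℝ → Fin m → ℝ) (x : ℝ → Fin n → ℝ) (T : ℝ), 0 ≤ T ∧
    IsTrajOn f u x T ∧ x 0 = x₀ ∧ (∀ t ∈ Set.Icc (0:ℝ) T, x t ∈ Ω) ∧ x T ∈ Ωf

lemma mem_range_of_dot_eq_zero {n m : ℕ} (B : Matrix (Fin n) (Fin m) ℝ)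
    (hBrank : B.rank = n - 1) (β : Fin n → ℝ) (hβ1 : β ⬝ᵥ β = 1)
    (hβB : ∀ w : Fin m → ℝ, β ⬝ᵥ B.mulVec w = 0)
    (w : Fin n → ℝ) (hw : β ⬝ᵥ w = 0) : w ∈ Set.range B.mulVec := by
  classical
  set φ : (Fin n → ℝ) →ₗ[ℝ] ℝ :=
    { toFun := fun v => β ⬝ᵥ v
      map_add' := fun u v => dotProduct_add β u v
      map_smul' := fun c v => by simp } with hφ
  have hφtop : LinearMap.range φ = ⊤ := by
    rw [LinearMap.range_eq_top]
    intro r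
    exact ⟨r • β, by simp [hφ, hβ1]⟩
  have h := LinearMap.finrank_range_add_finrank_ker φ
  rw [hφtop] at h
  simp [Module.finrank_fin_fun] at h
  have hker : Module.finrank ℝ (LinearMap.ker φ) = n - 1 := by omega
  have hle : LinearMap.range B.mulVecLin ≤ LinearMap.ker φ := by
    rintro v ⟨u, rfl⟩
    simpa [hφ] using hβB u
  have hrk : Module.finrank ℝ (LinearMap.range B.mulVecLin) = n - 1 := by
    unfold Matrix.rank at hBrank
    exact hBrank
  have heq : LinearMap.range B.mulVecLin = LinearMap.ker φ :=
    Submodule.eq_of_le_of_finrank_eq hle (by rw [hrk, hker])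
  have hwk : w ∈ LinearMap.ker φ := by simpa [hφ] using hw
  rw [← heq] at hwk
  obtain ⟨v, hv⟩ := hwk
  exact ⟨v, by simpa using hv⟩

lemma exists_flow (l0 l1 : ℝ) (h0 : 0 < l0) (h1 : 0 < l1) :
    ∃ (s : ℝ → ℝ) (T : ℝ), 0 ≤ T ∧ s 0 = 0 ∧ s T = 1 ∧
      (∀ t : ℝ, HasDerivAt s (l0 + (l1 - l0) * s t) t) ∧
      (∀ t ∈ Set.Icc (0:ℝ) T, s t ∈ Set.Icc (0:ℝ) 1) := by
  set γ := l1 - l0 with hγdef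
  rcases eq_or_ne γ 0 with hγ | hγ
  · refine ⟨fun t => l0 * t, 1 / l0, by positivity, by simp, by field_simp, ?_, ?_⟩
    · intro t
      simpa [hγ] using (hasDerivAt_id t).const_mul l0
    · rintro t ⟨ht0, ht1⟩
      constructor
      · positivity
      · calc l0 * t ≤ l0 * (1 / l0) := by
              exact mul_le_mul_of_nonneg_left ht1 h0.le
          _ = 1 := by field_simp
  · have eT : Real.exp (γ * (Real.log (l1 / l0) / γ)) = l1 / l0 := by
      rw [mul_div_cancel₀ _ hγ]
      exact Real.exp_log (by positivity)
    have hmono : Monotone fun t => l0 / γ * (Real.exp (γ * t) - 1) := by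
      intro t1 t2 h
      rcases lt_or_gt_of_ne hγ with hg | hg
      · have he : Real.exp (γ * t2) ≤ Real.exp (γ * t1) :=
          Real.exp_le_exp.mpr (by nlinarith)
        have hc : l0 / γ ≤ 0 := (div_neg_of_pos_of_neg h0 hg).le
        dsimp only
        nlinarith
      · have he : Real.exp (γ * t1) ≤ Real.exp (γ * t2) :=
          Real.exp_le_exp.mpr (by nlinarith)
        have hc : 0 ≤ l0 / γ := by positivity
        dsimp only
        nlinarith
    refine ⟨fun t => l0 / γ * (Real.exp (γ * t) - 1), Real.log (l1 / l0) / γ, ?_, by simp, ?_, ?_, ?_⟩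
    · rcases lt_or_gt_of_ne hγ with hg | hg
      · have hle : l1 / l0 ≤ 1 := by
          rw [div_le_one h0]; linarith
        have hl : Real.log (l1 / l0) ≤ 0 := Real.log_nonpos (by positivity) hle
        exact div_nonneg_of_nonpos hl hg.le
      · have hle : 1 ≤ l1 / l0 := by
          rw [le_div_iff₀ h0]; linarith
        have : 0 ≤ Real.log (l1 / l0) := Real.log_nonneg hle
        positivity
    · show l0 / γ * (Real.exp (γ * (Real.log (l1 / l0) / γ)) - 1) = 1
      rw [eT]
      field_simp
      exact hγdef.symm
    · intro t
      have hlin : HasDerivAt (fun u : ℝ => γ * u) γ t := by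
        simpa using (hasDerivAt_id t).const_mul γ
      have hexp : HasDerivAt (fun t => Real.exp (γ * t)) (Real.exp (γ * t) * γ) t :=
        (Real.hasDerivAt_exp (γ * t)).comp t hlin
      have h2 : HasDerivAt (fun t => l0 / γ * (Real.exp (γ * t) - 1))
          (l0 / γ * (Real.exp (γ * t) * γ)) t := (hexp.sub_const 1).const_mul _
      convert h2 using 1
      field_simp
      ring
    · rintro t ⟨ht0, ht1⟩
      have e0 : l0 / γ * (Real.exp (γ * 0) - 1) = 0 := by simp
      constructor
      · rw [← e0]; exact hmono ht0
      · have h2 := hmono ht1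
        dsimp only at h2
        rw [eT] at h2
        calc l0 / γ * (Real.exp (γ * t) - 1) ≤ l0 / γ * (l1 / l0 - 1) := h2
          _ = 1 := by field_simp; exact hγdef.symm

/-- If `z ≠ y` are points of `𝒫` with `z, y ∉ 𝒪` and `βᵀy < βᵀz`, then `z` can reach `y`
along the line segment joining them in finite time. -/
theorem reach_along_segment {n m : ℕ}
    (A : Matrix (Fin n) (Fin n) ℝ) (a : Fin n → ℝ) (B : Matrix (Fin n) (Fin m) ℝ)
    (hBrank : B.rank = n - 1)
    (V : Finset (Fin n → ℝ)) (P : Set (Fin n → ℝ))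
    (hP : P = convexHull ℝ (V : Set (Fin n → ℝ)))
    (hPfull : (interior P).Nonempty)
    (O : Set (Fin n → ℝ)) (hO : O = {x | A.mulVec x + a ∈ Set.range B.mulVec})
    (hdisj : interior P ∩ O = ∅)
    (β : Fin n → ℝ) (hβ1 : β ⬝ᵥ β = 1)
    (hβB : ∀ w : Fin m → ℝ, β ⬝ᵥ B.mulVec w = 0)
    (hβsign : ∀ x ∈ P, β ⬝ᵥ (A.mulVec x + a) ≤ 0)
    (z y : Fin n → ℝ) (hzP : z ∈ P) (hyP : y ∈ P) (hne : y ≠ z)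
    (hzO : z ∉ O) (hyO : y ∉ O)
    (hlt : β ⬝ᵥ y < β ⬝ᵥ z) :
    CanReach (fun x u => A.mulVec x + a + B.mulVec u) (segment ℝ z y) {y} z := by
  classical
  rw [hO] at hzO hyO
  have hrange := mem_range_of_dot_eq_zero B hBrank β hβ1 hβB
  have hp : β ⬝ᵥ (A.mulVec z + a) < 0 :=
    lt_of_le_of_ne (hβsign z hzP) (fun h => hzO (hrange _ h))
  have hq : β ⬝ᵥ (A.mulVec y + a) < 0 :=
    lt_of_le_of_ne (hβsign y hyP) (fun h => hyO (hrange _ h))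
  have hd : β ⬝ᵥ y - β ⬝ᵥ z < 0 := by linarith
  have hdne : β ⬝ᵥ y - β ⬝ᵥ z ≠ 0 := hd.ne
  set l0 : ℝ := (β ⬝ᵥ (A.mulVec z + a)) / (β ⬝ᵥ y - β ⬝ᵥ z) with hl0def
  set l1 : ℝ := (β ⬝ᵥ (A.mulVec y + a)) / (β ⬝ᵥ y - β ⬝ᵥ z) with hl1def
  have hl0 : 0 < l0 := div_pos_iff.mpr (Or.inr ⟨hp, hd⟩)
  have hl1 : 0 < l1 := div_pos_iff.mpr (Or.inr ⟨hq, hd⟩)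
  obtain ⟨s, T, hT, hs0, hsT, hs', hsmem⟩ := exists_flow l0 l1 hl0 hl1
  have hwmem : ∀ t : ℝ,
      ((l0 + (l1 - l0) * s t) • (y - z) - (A.mulVec (z + s t • (y - z)) + a))
        ∈ Set.range B.mulVec := by
    intro t
    apply hrange
    have hexp : β ⬝ᵥ ((l0 + (l1 - l0) * s t) • (y - z)
          - (A.mulVec (z + s t • (y - z)) + a))
        = (l0 + (l1 - l0) * s t) * (β ⬝ᵥ y - β ⬝ᵥ z)
          - ((β ⬝ᵥ A.mulVec z + β ⬝ᵥ a)
            + s t * ((β ⬝ᵥ A.mulVec y) - (β ⬝ᵥ A.mulVec z))) := by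
      simp only [dotProduct_sub, dotProduct_add, dotProduct_smul,
        Matrix.mulVec_add, Matrix.mulVec_smul, Matrix.mulVec_sub, smul_eq_mul]
      ring
    rw [hexp, hl0def, hl1def]
    simp only [dotProduct_add]
    field_simp
    ring
  set u : ℝ → Fin m → ℝ := fun t => (hwmem t).choose with hudef
  have huspec : ∀ t : ℝ, B.mulVec (u t)
      = (l0 + (l1 - l0) * s t) • (y - z) - (A.mulVec (z + s t • (y - z)) + a) :=
    fun t => (hwmem t).choose_spec
  refine ⟨u, fun t => z + s t • (y - z), T, hT, ?_, ?_, ?_, ?_⟩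
  · intro t ht
    have hxd : HasDerivAt (fun t => z + s t • (y - z))
        ((l0 + (l1 - l0) * s t) • (y - z)) t := ((hs' t).smul_const (y - z)).const_add z
    have heq2 : A.mulVec (z + s t • (y - z)) + a + B.mulVec (u t)
        = (l0 + (l1 - l0) * s t) • (y - z) := by
      rw [huspec t]; abel
    show HasDerivAt (fun t => z + s t • (y - z))
      (A.mulVec (z + s t • (y - z)) + a + B.mulVec (u t)) t
    rw [heq2]
    exact hxd
  · simp [hs0]
  · intro t ht
    rw [segment_eq_image']
    exact ⟨s t, hsmem t ht, rfl⟩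
  · simp only [Set.mem_singleton_iff, hsT, one_smul]
    abel
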